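/- (Softmax attention equals the mean of the kernel conditional density estimator, equation (E.7) in the proof of Proposition 4.3.) Fix d ≥ 2 and γ > 0, let σ be the uniform surface measure on S^{d−1} ⊂ ℝ^d, and let C₁ = ∫_{S^{d−1}} ⟨a, b⟩ exp(⟨a, b⟩/γ) dσ(a) for any unit b (independent of b). Let k_1,…,k_L ∈ S^{d−1} (keys), v_1,…,v_L ∈ S^{d−1} (values) and q ∈ S^{d−1} (query). Then ∫_{S^{d−1}} v · [ Σ_{ℓ=1}^{L} exp(⟨k_ℓ, q⟩/γ) exp(⟨v_ℓ, v⟩/γ) / Σ_{ℓ=1}^{L} exp(⟨k_ℓ, q⟩/γ) ] dσ(v) = C₁ · Σ_{ℓ=1}^{L} [ exp(⟨k_ℓ, q⟩/γ) / Σ_{j=1}^{L} exp(⟨k_j, q⟩/γ) ] v_ℓ, i.e., the kernel-smoothed conditional mean equals C₁ times the softmax attention output Vᵀ softmax(Kq/γ). -/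

import Mathlib

open MeasureTheory Metric Finset
open scoped Pointwise

noncomputable def sphereSurface (d : ℕ) :
    Measure (sphere (0 : EuclideanSpace ℝ (Fin d)) 1) :=
  (volume : Measure (EuclideanSpace ℝ (Fin d))).toSphere

variable {d : ℕ}

local notation "E" => EuclideanSpace ℝ (Fin d)

/-- A linear isometry equivalence induces a measurable equivalence of the unit sphere. -/
noncomputable def sphereME (f : E ≃ₗᵢ[ℝ] E) :
    sphere (0 : E) 1 ≃ᵐ sphere (0 : E) 1 where
  toFun w := ⟨f w, by simp [mem_sphere_zero_iff_norm, f.norm_map,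
    mem_sphere_zero_iff_norm.1 w.2]⟩
  invFun w := ⟨f.symm w, by simp [mem_sphere_zero_iff_norm, f.symm.norm_map,
    mem_sphere_zero_iff_norm.1 w.2]⟩
  left_inv w := by ext; simp
  right_inv w := by ext; simp
  measurable_toFun := Continuous.measurable (by
    exact Continuous.subtype_mk (f.continuous.comp continuous_subtype_val) _)
  measurable_invFun := Continuous.measurable (by
    exact Continuous.subtype_mk (f.symm.continuous.comp continuous_subtype_val) _)

lemma coe_image_preimage (f : E ≃ₗᵢ[ℝ] E) (s : Set (sphere (0 : E) 1)) :
    ((↑) '' (sphereME f ⁻¹' s) : Set E) = f.symm '' ((↑) '' s) := by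
  ext x
  constructor
  · rintro ⟨w, hw, rfl⟩
    exact ⟨f w, ⟨sphereME f w, hw, rfl⟩, by simp⟩
  · rintro ⟨y, ⟨z, hz, rfl⟩, rfl⟩
    refine ⟨⟨f.symm z, ?_⟩, ?_, rfl⟩
    · simpa [mem_sphere_zero_iff_norm, f.symm.norm_map] using mem_sphere_zero_iff_norm.1 z.2
    · show sphereME f _ ∈ s
      convert hz
      ext : 1
      simp [sphereME]

lemma map_sphereME (f : E ≃ₗᵢ[ℝ] E) :
    Measure.map (sphereME f) (sphereSurface d) = sphereSurface d := by
  ext s hs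
  rw [Measure.map_apply (sphereME f).measurable hs, sphereSurface,
    Measure.toSphere_apply' _ ((sphereME f).measurable hs),
    Measure.toSphere_apply' _ hs, coe_image_preimage]
  congr 1
  have h1 : Set.Ioo (0:ℝ) 1 • (f.symm '' ((↑) '' s)) = f.symm '' (Set.Ioo (0:ℝ) 1 • ((↑) '' s)) := by
    ext x
    simp only [Set.mem_smul_set, Set.mem_image]
    constructor
    · rintro ⟨c, hc, y, ⟨z, hz, rfl⟩, rfl⟩
      exact ⟨c • z, ⟨c, hc, z, hz, rfl⟩, by simp⟩
    · rintro ⟨y, ⟨c, hc, z, hz, rfl⟩, rfl⟩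
      exact ⟨c, hc, f.symm z, ⟨z, hz, rfl⟩, by simp⟩
  rw [h1]
  set B := Set.Ioo (0:ℝ) 1 • (((↑) '' s : Set E))
  have h2 : f.symm '' B = f ⁻¹' B := by
    ext x
    constructor
    · rintro ⟨y, hy, rfl⟩; simpa using hy
    · intro hx; exact ⟨f x, hx, by simp⟩
  rw [h2]
  calc volume (f ⁻¹' B) = Measure.map (f.toMeasurableEquiv) volume B :=
        (f.toMeasurableEquiv.map_apply B).symm
    _ = volume B := by
        have : Measure.map (⇑(f.toMeasurableEquiv)) volume = volume := f.measurePreserving.map_eq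
        rw [this]

lemma integral_sphereME {F : Type*} [NormedAddCommGroup F] [NormedSpace ℝ F]
    (f : E ≃ₗᵢ[ℝ] E) (g : sphere (0 : E) 1 → F) :
    ∫ w, g (sphereME f w) ∂(sphereSurface d) = ∫ w, g w ∂(sphereSurface d) := by
  conv_rhs => rw [← map_sphereME f]
  exact (MeasureTheory.integral_map_equiv (sphereME f) g).symm

instance : IsFiniteMeasure (sphereSurface d) := by
  unfold sphereSurface; infer_instance

lemma continuous_integrand (γ : ℝ) (b : sphere (0 : E) 1) :
    Continuous (fun w : sphere (0 : E) 1 =>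
      Real.exp ((inner ℝ (b : E) (w : E) : ℝ) / γ) • (w : E)) := by
  have h1 : Continuous fun w : sphere (0 : E) 1 => (inner ℝ (b : E) (w : E) : ℝ) :=
    Continuous.inner continuous_const continuous_subtype_val
  exact ((Real.continuous_exp.comp (h1.div_const γ)).smul continuous_subtype_val)

lemma integrable_integrand (γ : ℝ) (b : sphere (0 : E) 1) :
    Integrable (fun w : sphere (0 : E) 1 =>
      Real.exp ((inner ℝ (b : E) (w : E) : ℝ) / γ) • (w : E)) (sphereSurface d) := by
  have := Metric.sphere.compactSpace (0 : E) 1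
  have h := ((continuous_integrand γ b).continuousOn).integrableOn_compact
    (isCompact_univ (X := sphere (0 : E) 1)) (μ := sphereSurface d)
  rwa [IntegrableOn, Measure.restrict_univ] at h

lemma key_integral (γ : ℝ) (C₁ : ℝ)
    (hC₁ : ∀ b : sphere (0 : E) 1,
      C₁ = ∫ a : sphere (0 : E) 1,
          (inner ℝ (a : E) (b : E) : ℝ) *
            Real.exp ((inner ℝ (a : E) (b : E) : ℝ) / γ) ∂(sphereSurface d))
    (b : sphere (0 : E) 1) :
    (∫ w : sphere (0 : E) 1,
      Real.exp ((inner ℝ (b : E) (w : E) : ℝ) / γ) • (w : E) ∂(sphereSurface d))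
      = C₁ • (b : E) := by
  have hb : ‖(b : E)‖ = 1 := mem_sphere_zero_iff_norm.1 b.2
  set g : sphere (0 : E) 1 → E := fun w =>
    Real.exp ((inner ℝ (b : E) (w : E) : ℝ) / γ) • (w : E) with hg
  set I : E := ∫ w, g w ∂(sphereSurface d) with hI
  have hbmem : (b : E) ∈ (ℝ ∙ (b : E)) := Submodule.mem_span_singleton_self _
  set R : E ≃ₗᵢ[ℝ] E := Submodule.reflection (ℝ ∙ (b : E)) with hR
  have hRb : R (b : E) = (b : E) := Submodule.reflection_mem_subspace_eq_self hbmem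
  have hint : Integrable g (sphereSurface d) := integrable_integrand (d := d) γ b
  -- I is fixed by the reflection R
  have hRI : R I = I := by
    have h1 : ∫ w, g (sphereME R w) ∂(sphereSurface d) = I := integral_sphereME R g
    have h2 : ∀ w : sphere (0 : E) 1, g (sphereME R w) =
        (R.toContinuousLinearEquiv : E →L[ℝ] E) (g w) := by
      intro w
      show Real.exp ((inner ℝ (b : E) (R (w : E)) : ℝ) / γ) • (R (w : E)) = R (g w)
      have : (inner ℝ (b : E) (R (w : E)) : ℝ) = inner ℝ (b : E) (w : E) := by
        conv_lhs => rw [← hRb]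
        exact R.inner_map_map _ _
      rw [this]
      exact (R.map_smul _ _).symm
    rw [show (fun w => g (sphereME R w)) = fun w =>
        (R.toContinuousLinearEquiv : E →L[ℝ] E) (g w) from funext h2] at h1
    rw [ContinuousLinearMap.integral_comp_comm _ hint] at h1
    exact h1
  obtain ⟨c, hc⟩ := Submodule.mem_span_singleton.1 ((Submodule.reflection_eq_self_iff I).1 hRI)
  -- compute the coefficient via the inner product with b
  have hinner : (inner ℝ (b : E) I : ℝ) = c := by
    rw [← hc, real_inner_smul_right, real_inner_self_eq_norm_sq, hb]
    ring
  have hinner2 : (inner ℝ (b : E) I : ℝ) = C₁ := by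
    rw [hI]
    show (innerSL ℝ (b : E)) (∫ w, g w ∂(sphereSurface d)) = C₁
    rw [← ContinuousLinearMap.integral_comp_comm (innerSL ℝ (b : E)) hint]
    have : ∀ w : sphere (0 : E) 1, (innerSL ℝ (b : E)) (g w) =
        (inner ℝ (w : E) (b : E) : ℝ) * Real.exp ((inner ℝ (w : E) (b : E) : ℝ) / γ) := by
      intro w
      simp only [innerSL_apply_apply, hg, real_inner_smul_right]
      rw [real_inner_comm]
      ring
    rw [show (fun w => (innerSL ℝ (b : E)) (g w)) = fun w : sphere (0 : E) 1 =>
        (inner ℝ (w : E) (b : E) : ℝ) * Real.exp ((inner ℝ (w : E) (b : E) : ℝ) / γ)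
      from funext this]
    exact (hC₁ b).symm
  rw [← hc, hinner.symm.trans hinner2]

/- **Softmax attention equals the mean of the kernel conditional density estimator**
(equation (E.7) in the proof of Proposition 4.3): with `C₁ = ∫ ⟨a,b⟩ exp(⟨a,b⟩/γ) dσ(a)`
(independent of the unit vector `b`), keys `k_ℓ`, values `v_ℓ` and query `q` on the unit
sphere, the kernel-smoothed conditional mean
`∫ v · [Σ_ℓ e^{⟨k_ℓ,q⟩/γ} e^{⟨v_ℓ,v⟩/γ} / Σ_ℓ e^{⟨k_ℓ,q⟩/γ}] dσ(v)` equals `C₁` times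
the softmax attention output `Σ_ℓ softmax(Kq/γ)_ℓ v_ℓ`. -/
theorem softmax_attention_eq_kernel_smoother_mean
    (d : ℕ) (hd : 2 ≤ d) (γ : ℝ) (hγ : 0 < γ) (C₁ : ℝ)
    (hC₁ : ∀ b : sphere (0 : EuclideanSpace ℝ (Fin d)) 1,
      C₁ = ∫ a : sphere (0 : EuclideanSpace ℝ (Fin d)) 1,
          (inner ℝ (a : EuclideanSpace ℝ (Fin d)) (b : EuclideanSpace ℝ (Fin d)) : ℝ) *
            Real.exp ((inner ℝ (a : EuclideanSpace ℝ (Fin d))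
              (b : EuclideanSpace ℝ (Fin d)) : ℝ) / γ) ∂(sphereSurface d))
    (L : ℕ) (hL : 0 < L)
    (k v : Fin L → sphere (0 : EuclideanSpace ℝ (Fin d)) 1)
    (q : sphere (0 : EuclideanSpace ℝ (Fin d)) 1) :
    (∫ w : sphere (0 : EuclideanSpace ℝ (Fin d)) 1,
        ((∑ l : Fin L,
            Real.exp ((inner ℝ (k l : EuclideanSpace ℝ (Fin d))
              (q : EuclideanSpace ℝ (Fin d)) : ℝ) / γ) *
            Real.exp ((inner ℝ (v l : EuclideanSpace ℝ (Fin d))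
              (w : EuclideanSpace ℝ (Fin d)) : ℝ) / γ)) /
          (∑ l : Fin L,
            Real.exp ((inner ℝ (k l : EuclideanSpace ℝ (Fin d))
              (q : EuclideanSpace ℝ (Fin d)) : ℝ) / γ))) •
          (w : EuclideanSpace ℝ (Fin d)) ∂(sphereSurface d))
      = C₁ •
        ∑ l : Fin L,
          (Real.exp ((inner ℝ (k l : EuclideanSpace ℝ (Fin d))
              (q : EuclideanSpace ℝ (Fin d)) : ℝ) / γ) /
            ∑ j : Fin L,
              Real.exp ((inner ℝ (k j : EuclideanSpace ℝ (Fin d))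
                (q : EuclideanSpace ℝ (Fin d)) : ℝ) / γ)) •
            (v l : EuclideanSpace ℝ (Fin d)) := by
  classical
  set σ := sphereSurface d
  set E' := EuclideanSpace ℝ (Fin d)
  have hne : Nonempty (Fin L) := Fin.pos_iff_nonempty.1 hL
  set c : Fin L → ℝ := fun l =>
    Real.exp ((inner ℝ (k l : E') (q : E') : ℝ) / γ) with hc
  set S : ℝ := ∑ l : Fin L, c l with hS
  have hS0 : 0 < S := Finset.sum_pos (fun _ _ => Real.exp_pos _) Finset.univ_nonempty
  have hfun : ∀ w : sphere (0 : E') 1,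
      ((∑ l : Fin L, c l * Real.exp ((inner ℝ (v l : E') (w : E') : ℝ) / γ)) / S) • (w : E')
        = ∑ l : Fin L, (c l / S) •
            (Real.exp ((inner ℝ (v l : E') (w : E') : ℝ) / γ) • (w : E')) := by
    intro w
    rw [Finset.sum_div, Finset.sum_smul]
    refine Finset.sum_congr rfl fun l _ => ?_
    rw [smul_smul]
    congr 1
    ring
  calc (∫ w : sphere (0 : E') 1,
        ((∑ l : Fin L, c l * Real.exp ((inner ℝ (v l : E') (w : E') : ℝ) / γ)) / S) •
          (w : E') ∂σ)
      = ∫ w : sphere (0 : E') 1, ∑ l : Fin L, (c l / S) •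
          (Real.exp ((inner ℝ (v l : E') (w : E') : ℝ) / γ) • (w : E')) ∂σ := by
        exact integral_congr_ae (Filter.Eventually.of_forall hfun)
    _ = ∑ l : Fin L, ∫ w : sphere (0 : E') 1, (c l / S) •
          (Real.exp ((inner ℝ (v l : E') (w : E') : ℝ) / γ) • (w : E')) ∂σ := by
        refine integral_finset_sum _ fun l _ => ?_
        exact (integrable_integrand γ (v l)).smul (c l / S)
    _ = ∑ l : Fin L, (c l / S) • (C₁ • (v l : E')) := by
        refine Finset.sum_congr rfl fun l _ => ?_
        rw [integral_smul, key_integral γ C₁ hC₁ (v l)]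
    _ = C₁ • ∑ l : Fin L, (c l / S) • (v l : E') := by
        rw [Finset.smul_sum]
        exact Finset.sum_congr rfl fun l _ => smul_comm _ _ _
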